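/- Let (M,ρ) be a complete metric space and let f : M → ℝ ∪ {+∞} be proper, lower semicontinuous and bounded below. Then for each x ∈ dom f there is a sequence {xₙ} with each xₙ ∈ dom f and |∇̃f|(xₙ) < ∞, such that xₙ → x and f(xₙ) → f(x). -/

import Mathlib

open Filter Topology ENNReal


theorem ekelandReal {X : Type*} [MetricSpace X] [CompleteSpace X] (g : X → ℝ)
    (hg : LowerSemicontinuous g) (C : ℝ) (hC : ∀ y, C ≤ g y) (ε : ℝ) (hε : 0 < ε) (x₀ : X) :
    ∃ z, g z + ε * dist z x₀ ≤ g x₀ ∧ ∀ y, g z ≤ g y + ε * dist y z := by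
  classical
  set T : X → Set X := fun x => {y | g y + ε * dist y x ≤ g x} with hT
  have hself : ∀ x, x ∈ T x := by intro x; simp [hT]
  have hne : ∀ x, (g '' T x).Nonempty := fun x => ⟨g x, x, hself x, rfl⟩
  have hbdd : ∀ x, BddBelow (g '' T x) := by
    intro x; exact ⟨C, by rintro _ ⟨y, -, rfl⟩; exact hC y⟩
  set m : X → ℝ := fun x => sInf (g '' T x) with hm
  have H : ∀ (n : ℕ) (x : X), ∃ y, y ∈ T x ∧ g y ≤ m x + (1/2)^n := by
    intro n x
    have hlt : m x < m x + (1/2)^n := by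
      have : (0:ℝ) < (1/2)^n := by positivity
      linarith
    obtain ⟨_, ⟨y, hy, rfl⟩, hlt2⟩ := exists_lt_of_csInf_lt (hne x) hlt
    exact ⟨y, hy, hlt2.le⟩
  set F : ℕ → X → X := fun n x => Classical.choose (H n x) with hF
  set seq : ℕ → X := fun n => Nat.rec x₀ F n with hseqdef
  have hseq0 : seq 0 = x₀ := rfl
  have hseqS : ∀ n, seq (n+1) = F n (seq n) := fun n => rfl
  have hmem : ∀ n, seq (n+1) ∈ T (seq n) := by
    intro n; rw [hseqS]; exact (Classical.choose_spec (H n (seq n))).1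
  have hval : ∀ n, g (seq (n+1)) ≤ m (seq n) + (1/2)^n := by
    intro n; rw [hseqS]; exact (Classical.choose_spec (H n (seq n))).2
  have htrans : ∀ x y z, y ∈ T x → z ∈ T y → z ∈ T x := by
    intro x y z hy hz
    simp only [hT, Set.mem_setOf_eq] at *
    have := dist_triangle z y x
    nlinarith [hε.le]
  have hchain : ∀ n k, seq (n+k) ∈ T (seq n) := by
    intro n k
    induction k with
    | zero => exact hself _
    | succ k ih => exact htrans _ _ _ ih (hmem (n+k))
  set a : ℕ → ℝ := fun n => g (seq n) with ha
  have hanti : ∀ n k, a (n+k) + ε * dist (seq (n+k)) (seq n) ≤ a n := fun n k => hchain n k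
  have haanti : Antitone a := by
    refine antitone_nat_of_succ_le fun n => ?_
    have h1 := hanti n 1
    have h2 := dist_nonneg (x := seq (n+1)) (y := seq n)
    nlinarith
  have habdd : BddBelow (Set.range a) := ⟨C, by rintro _ ⟨n, rfl⟩; exact hC _⟩
  set L : ℝ := ⨅ n, a n with hL
  have haL : Tendsto a atTop (𝓝 L) := tendsto_atTop_ciInf haanti habdd
  have hLle : ∀ n, L ≤ a n := fun n => ciInf_le habdd n
  have hcauchy : CauchySeq seq := by
    rw [Metric.cauchySeq_iff']
    intro δ hδ
    obtain ⟨N, hN⟩ := (haL.eventually_lt_const (show L < L + ε * δ by nlinarith)).exists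
    refine ⟨N, fun n hn => ?_⟩
    obtain ⟨k, rfl⟩ := Nat.exists_eq_add_of_le hn
    have h1 := hanti N k
    have h2 := hLle (N + k)
    have h3 : ε * dist (seq (N+k)) (seq N) < ε * δ := by linarith
    exact lt_of_mul_lt_mul_left h3 hε.le
  obtain ⟨z, hz⟩ := cauchySeq_tendsto_of_complete hcauchy
  have hgzL : g z ≤ L := by
    by_contra h
    push_neg at h
    obtain ⟨c, hc1, hc2⟩ := exists_between h
    have hev : ∀ᶠ n in atTop, c < a n := hz.eventually (hg z c hc2)
    have : c ≤ L := ge_of_tendsto haL (hev.mono fun n h => h.le)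
    linarith
  have hcrit_n : ∀ n, L + ε * dist z (seq n) ≤ a n := by
    intro n
    have hsub : Tendsto (fun k => seq (n+k)) atTop (𝓝 z) := by
      have h1 : Tendsto (fun k => k + n) atTop atTop := tendsto_add_atTop_nat n
      have := hz.comp h1
      simpa [Function.comp_def, Nat.add_comm] using this
    have hd : Tendsto (fun k => dist (seq (n+k)) (seq n)) atTop (𝓝 (dist z (seq n))) :=
      hsub.dist tendsto_const_nhds
    have ht : Tendsto (fun k => L + ε * dist (seq (n+k)) (seq n)) atTop
        (𝓝 (L + ε * dist z (seq n))) := (hd.const_mul ε).const_add L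
    refine le_of_tendsto ht (Eventually.of_forall fun k => ?_)
    have h1 := hanti n k
    have h2 := hLle (n+k)
    linarith
  refine ⟨z, ?_, ?_⟩
  · have h0 := hcrit_n 0
    have h00 : a 0 = g x₀ := rfl
    rw [hseq0] at h0
    linarith
  · intro y
    by_contra h
    push_neg at h
    have hyT : ∀ n, y ∈ T (seq n) := by
      intro n
      simp only [hT, Set.mem_setOf_eq]
      have htri := dist_triangle y z (seq n)
      have h1 := hcrit_n n
      nlinarith [hε.le]
    have hm_le : ∀ n, m (seq n) ≤ g y := fun n => csInf_le (hbdd _) ⟨y, hyT n, rfl⟩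
    have h2 : ∀ n, a (n+1) ≤ g y + (1/2)^n := fun n => (hval n).trans (by linarith [hm_le n])
    have hLgy : L ≤ g y := by
      have ht : Tendsto (fun n : ℕ => g y + (1/2:ℝ)^n) atTop (𝓝 (g y)) := by
        have := (tendsto_pow_atTop_nhds_zero_of_lt_one (by norm_num : (0:ℝ) ≤ 1/2)
          (by norm_num : (1/2:ℝ) < 1)).const_add (g y)
        simpa using this
      have ha1 : Tendsto (fun n => a (n+1)) atTop (𝓝 L) := by
        have h1 : Tendsto (fun k : ℕ => k + 1) atTop atTop := tendsto_add_atTop_nat 1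
        exact haL.comp h1
      exact le_of_tendsto_of_tendsto' ha1 ht h2
    have hd : 0 ≤ ε * dist y z := by positivity
    linarith


theorem ekelandEReal {M : Type*} [MetricSpace M] [CompleteSpace M] (f : M → EReal)
    (hlsc : LowerSemicontinuous f) (C : ℝ) (hC : ∀ y, (C : EReal) ≤ f y)
    (x : M) (hx : f x ≠ ⊤) (ε : ℝ) (hε : 0 < ε) :
    ∃ z, f z ≤ f x ∧ ε * dist z x ≤ (f x).toReal - min C ((f x).toReal + 1) ∧
      ∀ y, f z ≤ f y + ((ε * dist y z : ℝ) : EReal) := by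
  set R : ℝ := (f x).toReal with hR
  set D : ℝ := min C (R + 1) with hD
  have hxbot : f x ≠ ⊥ := fun h => by simpa [h] using hC x
  have hfx : ((R : ℝ) : EReal) = f x := EReal.coe_toReal hx hxbot
  set fbar : M → EReal := fun y => min (f y) ((R + 1 : ℝ) : EReal) with hfbar
  have hDle : ∀ y, ((D : ℝ) : EReal) ≤ fbar y := by
    intro y
    refine le_min ?_ ?_
    · exact le_trans (by exact_mod_cast min_le_left C (R+1)) (hC y)
    · exact_mod_cast min_le_right C (R+1)
  have htop : ∀ y, fbar y ≠ ⊤ := by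
    intro y h
    have : fbar y ≤ ((R + 1 : ℝ) : EReal) := min_le_right _ _
    rw [h] at this
    exact (EReal.coe_ne_top _) (top_le_iff.mp this)
  have hbot : ∀ y, fbar y ≠ ⊥ := by
    intro y h
    have := hDle y
    rw [h] at this
    exact (EReal.coe_ne_bot D) (le_bot_iff.mp this)
  set g : M → ℝ := fun y => (fbar y).toReal with hg
  have gcoe : ∀ y, ((g y : ℝ) : EReal) = fbar y := fun y => EReal.coe_toReal (htop y) (hbot y)
  have hglsc : LowerSemicontinuous g := by
    intro y c hc
    have h1 : ((c : ℝ) : EReal) < fbar y := by rw [← gcoe y]; exact_mod_cast hc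
    have h2 : ((c : ℝ) : EReal) < f y := h1.trans_le (min_le_left _ _)
    have h3 : ((c : ℝ) : EReal) < ((R + 1 : ℝ) : EReal) := h1.trans_le (min_le_right _ _)
    filter_upwards [hlsc y _ h2] with w hw
    have : ((c : ℝ) : EReal) < fbar w := lt_min hw h3
    rw [← gcoe w] at this
    exact_mod_cast this
  have hgbdd : ∀ y, D ≤ g y := by
    intro y
    have := hDle y
    rw [← gcoe y] at this
    exact_mod_cast this
  obtain ⟨z, h1, h2⟩ := ekelandReal g hglsc D hgbdd ε hε x
  have hfbarx : fbar x = f x := by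
    rw [hfbar]
    refine min_eq_left ?_
    rw [← hfx]
    exact_mod_cast (by linarith : R ≤ R + 1)
  have hgx : g x = R := by rw [hg]; simp only [hfbarx]; rfl
  have hgz : g z ≤ R := by
    have := dist_nonneg (x := z) (y := x)
    nlinarith [h1, hgx]
  have hfz : f z ≤ f x := by
    have hbz : fbar z ≤ ((R : ℝ) : EReal) := by rw [← gcoe z]; exact_mod_cast hgz
    rcases le_total (f z) (((R + 1 : ℝ) : EReal)) with hle | hle
    · rw [← hfx]
      exact le_trans (le_of_eq (min_eq_left hle).symm) hbz
    · exfalso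
      have h5 : ((R + 1 : ℝ) : EReal) ≤ ((R : ℝ) : EReal) :=
        le_trans (le_of_eq (min_eq_right hle).symm) hbz
      have : (R + 1 : ℝ) ≤ R := by exact_mod_cast h5
      linarith
  refine ⟨z, hfz, ?_, ?_⟩
  · have := hgbdd z
    rw [hgx] at h1
    linarith
  · intro y
    have hcrit := h2 y
    have hE : fbar z ≤ fbar y + ((ε * dist y z : ℝ) : EReal) := by
      rw [← gcoe z, ← gcoe y, ← EReal.coe_add]
      exact_mod_cast hcrit
    have hfz2 : fbar z = f z := by
      refine min_eq_left (le_trans hfz ?_)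
      rw [← hfx]
      exact_mod_cast (by linarith : R ≤ R + 1)
    calc f z = fbar z := hfz2.symm
      _ ≤ fbar y + ((ε * dist y z : ℝ) : EReal) := hE
      _ ≤ f y + ((ε * dist y z : ℝ) : EReal) := add_le_add (min_le_left _ _) le_rfl



/-- The positive part `[x]⁺` of an extended real, as an element of `ℝ≥0∞`. -/
noncomputable def erealPos (x : EReal) : ℝ≥0∞ := if x = ⊤ then ⊤ else ENNReal.ofReal x.toReal

/-- The global slope `|∇̃ f|(x) = sup_{y ≠ x} [f x - f y]⁺ / ρ(x,y)` of `f : M → ℝ ∪ {+∞}`. -/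
noncomputable def globalSlope {M : Type*} [MetricSpace M] (f : M → EReal) (x : M) : ℝ≥0∞ :=
  ⨆ y ∈ {y : M | y ≠ x}, erealPos (f x - f y) / edist x y

/-- The local slope `|∇ f|(x) = limsup_{y → x, y ≠ x} [f x - f y]⁺ / ρ(x,y)`. -/
noncomputable def localSlope {M : Type*} [MetricSpace M] (f : M → EReal) (x : M) : ℝ≥0∞ :=
  Filter.limsup (fun y => erealPos (f x - f y) / edist x y) (𝓝[≠] x)

/-- `ε`-global-critical points: `x ∈ dom f` with `f y ≥ f x - ε·ρ(y,x)` for all `y`. -/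
def epsCrit {M : Type*} [MetricSpace M] (ε : ℝ) (f : M → EReal) : Set M :=
  {x | f x ≠ ⊤ ∧ ∀ y, f x - ↑(ε * dist y x) ≤ f y}

/-- graphical density of `dom |∇̃f|` in `dom f`: for `f` proper, lsc and
bounded below on a complete metric space, every point of `dom f` is the limit of a sequence
of points of finite global slope along which the values of `f` converge as well. -/
theorem graphical_density {M : Type*} [MetricSpace M] [CompleteSpace M] (f : M → EReal)
    (hproper : ∃ x, f x ≠ ⊤) (hlsc : LowerSemicontinuous f)
    (hbdd : ∃ C : ℝ, ∀ x, (C : EReal) ≤ f x) :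
    ∀ x, f x ≠ ⊤ → ∃ u : ℕ → M,
      (∀ n, f (u n) ≠ ⊤ ∧ globalSlope f (u n) < ⊤) ∧
      Tendsto u atTop (𝓝 x) ∧ Tendsto (fun n => f (u n)) atTop (𝓝 (f x)) := by
  
  intro x hx
  obtain ⟨C, hC⟩ := hbdd
  set R : ℝ := (f x).toReal with hR
  set D : ℝ := min C (R + 1) with hD
  have hε : ∀ n : ℕ, (0:ℝ) < (n:ℝ) + 1 := fun n => by positivity
  have hEk := fun n : ℕ => ekelandEReal f hlsc C hC x hx ((n:ℝ)+1) (hε n)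
  set u : ℕ → M := fun n => Classical.choose (hEk n) with hu
  have hspec : ∀ n, f (u n) ≤ f x ∧ ((n:ℝ)+1) * dist (u n) x ≤ R - D ∧
      ∀ y, f (u n) ≤ f y + ((((n:ℝ)+1) * dist y (u n) : ℝ) : EReal) :=
    fun n => Classical.choose_spec (hEk n)
  have hbot : ∀ y : M, f y ≠ ⊥ := fun y h => by simpa [h] using hC y
  have hfun_top : ∀ n, f (u n) ≠ ⊤ := fun n h =>
    hx (top_le_iff.mp (h ▸ (hspec n).1))
  refine ⟨u, fun n => ⟨hfun_top n, ?_⟩, ?_, ?_⟩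
  · -- global slope finite
    have hle : globalSlope f (u n) ≤ ENNReal.ofReal ((n:ℝ)+1) := by
      rw [globalSlope]
      refine iSup₂_le fun y hy => ?_
      have hy' : y ≠ u n := hy
      by_cases hfy : f y = ⊤
      · have hb : f (u n) - f y = ⊥ := by rw [hfy]; exact EReal.sub_top _
        simp [erealPos, hb]
      · set A : ℝ := (f (u n)).toReal
        set B : ℝ := (f y).toReal
        have hA : ((A : ℝ) : EReal) = f (u n) := EReal.coe_toReal (hfun_top n) (hbot _)
        have hB : ((B : ℝ) : EReal) = f y := EReal.coe_toReal hfy (hbot y)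
        have hAB : f (u n) - f y = ((A - B : ℝ) : EReal) := by
          rw [← hA, ← hB, EReal.coe_sub]
        have hcrit := (hspec n).2.2 y
        have hABle : A - B ≤ ((n:ℝ)+1) * dist y (u n) := by
          rw [← hA, ← hB, ← EReal.coe_add] at hcrit
          have := (EReal.coe_le_coe_iff).mp hcrit
          linarith
        have hdpos : 0 < dist (u n) y := dist_pos.mpr (Ne.symm hy')
        have hpos : erealPos ((A - B : ℝ) : EReal) = ENNReal.ofReal (A - B) := by
          rw [erealPos, if_neg (EReal.coe_ne_top _), EReal.toReal_coe]
        rw [hAB, edist_dist, hpos,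
          ENNReal.div_le_iff (by simpa using hdpos) ENNReal.ofReal_ne_top,
          ← ENNReal.ofReal_mul (by positivity)]
        refine ENNReal.ofReal_le_ofReal ?_
        rw [dist_comm (u n) y]
        exact hABle
    exact lt_of_le_of_lt hle ENNReal.ofReal_lt_top
  · -- u n → x
    refine tendsto_iff_dist_tendsto_zero.2 (squeeze_zero (g := fun n : ℕ => (R - D) / ((n:ℝ)+1)) (fun n => dist_nonneg) (fun n => ?_) ?_)
    · exact (le_div_iff₀' (hε n)).mpr (hspec n).2.1
    · exact Tendsto.div_atTop tendsto_const_nhds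
        (tendsto_atTop_add_const_right atTop 1 tendsto_natCast_atTop_atTop)
  · -- values tendsto
    have htend : Tendsto u atTop (𝓝 x) := by
      refine tendsto_iff_dist_tendsto_zero.2 (squeeze_zero (g := fun n : ℕ => (R - D) / ((n:ℝ)+1)) (fun n => dist_nonneg) (fun n => ?_) ?_)
      · exact (le_div_iff₀' (hε n)).mpr (hspec n).2.1
      · exact Tendsto.div_atTop tendsto_const_nhds
          (tendsto_atTop_add_const_right atTop 1 tendsto_natCast_atTop_atTop)
    refine tendsto_of_le_liminf_of_limsup_le ?_ ?_
    · refine le_of_forall_lt fun c hc => ?_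
      obtain ⟨c', hc1, hc2⟩ := exists_between hc
      have hev : ∀ᶠ n in atTop, c' ≤ f (u n) :=
        (htend.eventually (hlsc x c' hc2)).mono fun n h => h.le
      exact lt_of_lt_of_le hc1 (le_liminf_of_le (by isBoundedDefault) hev)
    · exact limsup_le_of_le (by isBoundedDefault) (Eventually.of_forall fun n => (hspec n).1)
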